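/- Let U, J, V : ℝ → ℝ be differentiable functions satisfying U' = ξU - UV, J' = UV - J, V' = -mV + J with ξ = -m. Then the function I(t) = e^{mt}(U(t) + J(t) - (m-1)V(t)) is constant, i.e., its derivative vanishes everywhere. -/

import Mathlib

open Real

theorem virotherapy_first_integral (m ξ : ℝ) (U J V : ℝ → ℝ)
    (hξ : ξ = -m)
    (hU : ∀ t, HasDerivAt U (ξ * U t - U t * V t) t)
    (hJ : ∀ t, HasDerivAt J (U t * V t - J t) t)
    (hV : ∀ t, HasDerivAt V (-m * V t + J t) t) :
    ∀ t, HasDerivAt (fun t => Real.exp (m * t) * (U t + J t - (m - 1) * V t)) 0 t := by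
  intro t
  have he : HasDerivAt (fun t => Real.exp (m * t)) (m * Real.exp (m * t)) t := by
    have := (hasDerivAt_id t).const_mul m
    simpa [Function.comp_def, mul_comm] using (Real.hasDerivAt_exp (m * t)).comp t (by simpa using this)
  have hin : HasDerivAt (fun t => U t + J t - (m - 1) * V t)
      ((ξ * U t - U t * V t) + (U t * V t - J t) - (m - 1) * (-m * V t + J t)) t :=
    ((hU t).add (hJ t)).sub ((hV t).const_mul (m - 1))
  have : HasDerivAt (fun t => Real.exp (m * t) * (U t + J t - (m - 1) * V t)) _ t := he.mul hin
  convert this using 1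
  subst hξ
  ring
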